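/- Let F ∈ ℂ^{m×m} be Hurwitz and let α ∈ ℝ satisfy Re λ < α < 0 for every eigenvalue λ of F. Then there exists M ≥ 1 such that ‖exp(tF)‖ ≤ M·e^{αt} for all t ≥ 0, where exp denotes the matrix exponential and ‖·‖ the operator norm. -/

import Mathlib

open Matrix
open scoped Matrix.Norms.L2Operator

section Helpers

open Polynomial

lemma mem_spectrum_iff_isRoot' {n : Type*} [Fintype n] [DecidableEq n]
    (M : Matrix n n ℂ) (z : ℂ) : z ∈ spectrum ℂ M ↔ M.charpoly.IsRoot z := by
  rw [spectrum.mem_iff, Matrix.isUnit_iff_isUnit_det, isUnit_iff_ne_zero, not_not,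
    Matrix.charpoly, Polynomial.IsRoot, eval_det, Matrix.matPolyEquiv_charmatrix,
    Polynomial.eval_sub, Polynomial.eval_X, Polynomial.eval_C]
  have : algebraMap ℂ (Matrix n n ℂ) z = Matrix.scalar n z := by
    rw [Matrix.algebraMap_eq_diagonal, Matrix.scalar_apply]
    rfl
  rw [this]

end Helpers

section Helpers2

open Polynomial NormedSpace

variable {m : ℕ}

lemma exp_mem_adjoin (G : Matrix (Fin m) (Fin m) ℂ) :
    NormedSpace.exp G ∈ Algebra.adjoin ℂ {G} := by
  set S := Algebra.adjoin ℂ {G}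
  have hclosed : IsClosed (S.toSubmodule : Set (Matrix (Fin m) (Fin m) ℂ)) :=
    Submodule.closed_of_finiteDimensional _
  have hsum : HasSum (fun n : ℕ => (n.factorial : ℂ)⁻¹ • G ^ n) (NormedSpace.exp G) :=
    NormedSpace.exp_series_hasSum_exp' (𝕂 := ℂ) G
  have hG : G ∈ S := Algebra.self_mem_adjoin_singleton ℂ G
  have hmem : ∀ n : ℕ, (n.factorial : ℂ)⁻¹ • G ^ n ∈ S.toSubmodule := fun n =>
    Submodule.smul_mem _ _ (pow_mem hG n)
  exact hclosed.mem_of_tendsto hsum.tendsto_sum_nat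
    (Filter.Eventually.of_forall fun N => Submodule.sum_mem _ fun n _ => hmem n)

end Helpers2

section Helpers3

open Polynomial

variable {m : ℕ}

lemma pow_mulVec' {G : Matrix (Fin m) (Fin m) ℂ} {z : ℂ} {v : Fin m → ℂ}
    (h : G *ᵥ v = z • v) (n : ℕ) : (G ^ n) *ᵥ v = z ^ n • v := by
  induction n with
  | zero => simp
  | succ n ih =>
      rw [pow_succ, pow_succ, ← Matrix.mulVec_mulVec, h, Matrix.mulVec_smul, ih,
        smul_smul, mul_comm]

lemma aeval_mulVec' {G : Matrix (Fin m) (Fin m) ℂ} {z : ℂ} {v : Fin m → ℂ}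
    (h : G *ᵥ v = z • v) (p : ℂ[X]) : (aeval G p) *ᵥ v = p.eval z • v := by
  induction p using Polynomial.induction_on' with
  | add p q hp hq => rw [map_add, Matrix.add_mulVec, hp, hq, eval_add, add_smul]
  | monomial n c =>
      rw [aeval_monomial, eval_monomial, Algebra.algebraMap_eq_smul_one, smul_mul_assoc,
        one_mul, Matrix.smul_mulVec, pow_mulVec' h, smul_smul]

lemma exp_mulVec' {G : Matrix (Fin m) (Fin m) ℂ} {z : ℂ} {v : Fin m → ℂ}
    (h : G *ᵥ v = z • v) : (NormedSpace.exp G) *ᵥ v = Complex.exp z • v := by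
  let L : Matrix (Fin m) (Fin m) ℂ →ₗ[ℂ] (Fin m → ℂ) :=
    { toFun := fun M => M *ᵥ v,
      map_add' := fun A B => Matrix.add_mulVec A B v,
      map_smul' := fun c A => Matrix.smul_mulVec c A v }
  have hL : Continuous L := LinearMap.continuous_of_finiteDimensional L
  have hsum := NormedSpace.exp_series_hasSum_exp' (𝕂 := ℂ) G
  have h1 : HasSum (fun n : ℕ => L ((n.factorial : ℂ)⁻¹ • G ^ n))
      (L (NormedSpace.exp G)) := hsum.map L.toAddMonoidHom hL
  have h1' : HasSum (fun n : ℕ => ((n.factorial : ℂ)⁻¹ * z ^ n) • v)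
      (NormedSpace.exp G *ᵥ v) := by
    convert h1 using 2 with n
    swap
    · rfl
    show ((n.factorial : ℂ)⁻¹ * z ^ n) • v = ((n.factorial : ℂ)⁻¹ • G ^ n) *ᵥ v
    rw [Matrix.smul_mulVec, pow_mulVec' h, smul_smul]
  have h2 : HasSum (fun n : ℕ => ((n.factorial : ℂ)⁻¹ * z ^ n) • v)
      (Complex.exp z • v) := by
    have := (NormedSpace.exp_series_hasSum_exp' (𝕂 := ℂ) z).smul_const v
    simpa [smul_eq_mul, Complex.exp_eq_exp_ℂ] using this
  exact h1'.unique h2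

lemma spectrum_exp_subset (hm : 0 < m) (G : Matrix (Fin m) (Fin m) ℂ) :
    spectrum ℂ (NormedSpace.exp G) ⊆ Complex.exp '' spectrum ℂ G := by
  have : Nonempty (Fin m) := ⟨⟨0, hm⟩⟩
  obtain ⟨q, hq⟩ : ∃ q : ℂ[X], aeval G q = NormedSpace.exp G := by
    have h := exp_mem_adjoin G
    rwa [Algebra.adjoin_singleton_eq_range_aeval, AlgHom.mem_range] at h
  have hnon : (spectrum ℂ G).Nonempty := spectrum.nonempty G
  rw [← hq, spectrum.map_polynomial_aeval_of_nonempty G q hnon]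
  rintro z ⟨w, hw, rfl⟩
  refine ⟨w, hw, ?_⟩
  have hw' : Module.End.HasEigenvalue (Matrix.toLin' G) w := by
    rw [← AlgEquiv.spectrum_eq (Matrix.toLinAlgEquiv' (R := ℂ) (n := Fin m)) G] at hw
    exact Module.End.hasEigenvalue_iff_mem_spectrum.mpr hw
  obtain ⟨v, hv⟩ := hw'.exists_hasEigenvector
  have hGv : G *ᵥ v = w • v := by
    have h := hv.apply_eq_smul
    simpa [Matrix.toLin'_apply] using h
  have e1 : (aeval G q) *ᵥ v = q.eval w • v := aeval_mulVec' hGv q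
  rw [hq, exp_mulVec' hGv] at e1
  have := smul_left_injective ℂ hv.right e1
  exact this.symm ▸ rfl

end Helpers3

/-- A complex square matrix is Hurwitz if every eigenvalue (root of its characteristic
polynomial) has negative real part. -/
def IsHurwitzC {n : Type*} [Fintype n] [DecidableEq n] (M : Matrix n n ℂ) : Prop :=
  ∀ μ : ℂ, M.charpoly.IsRoot μ → μ.re < 0

/-- exponential decay of the matrix exponential of a Hurwitz matrix, with rate
`α` strictly dominating the spectrum. -/
theorem matrix_exp_decay
    (m : ℕ) (F : Matrix (Fin m) (Fin m) ℂ) (hF : IsHurwitzC F)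
    (α : ℝ) (hα_neg : α < 0)
    (hspec : ∀ μ : ℂ, F.charpoly.IsRoot μ → μ.re < α) :
    ∃ M : ℝ, 1 ≤ M ∧ ∀ t : ℝ, 0 ≤ t →
      ‖NormedSpace.exp (t • F)‖ ≤ M * Real.exp (α * t) := by
  rcases Nat.eq_zero_or_pos m with hm | hm
  · subst hm
    refine ⟨1, le_refl _, fun t ht => ?_⟩
    have : NormedSpace.exp (t • F) = 0 := Subsingleton.elim _ _
    rw [this, norm_zero, one_mul]
    exact (Real.exp_pos _).le
  have : Nonempty (Fin m) := ⟨⟨0, hm⟩⟩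
  letI : NormedAlgebra ℚ (Matrix (Fin m) (Fin m) ℂ) := NormedAlgebra.restrictScalars ℚ ℂ _
  set G : Matrix (Fin m) (Fin m) ℂ := F - (α : ℂ) • 1 with hG
  -- spectrum of G has negative real parts
  have hspecG : ∀ z ∈ spectrum ℂ G, z.re < 0 := by
    intro z hz
    have : z + α ∈ spectrum ℂ F := by
      have h1 : G = F - algebraMap ℂ _ (α : ℂ) := by
        rw [hG, Algebra.algebraMap_eq_smul_one]
      rw [h1, ← spectrum.sub_singleton_eq] at hz
      obtain ⟨x, hx, y, hy, rfl⟩ := hz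
      simp only [Set.mem_singleton_iff] at hy
      subst hy
      simpa using hx
    have := hspec _ ((mem_spectrum_iff_isRoot' F _).mp this)
    simp only [Complex.add_re, Complex.ofReal_re] at this
    linarith
  set B := NormedSpace.exp G with hB
  -- spectral radius of B is < 1
  have hρ : spectralRadius ℂ B < 1 := by
    have := spectrum.spectralRadius_lt_of_forall_lt (r := 1) B ?_
    · simpa using this
    · intro z hz
      obtain ⟨w, hw, rfl⟩ := spectrum_exp_subset hm G hz
      have : ‖Complex.exp w‖ < 1 := by
        rw [Complex.norm_exp]
        calc Real.exp w.re < Real.exp 0 := Real.exp_lt_exp.mpr (hspecG w hw)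
        _ = 1 := Real.exp_zero
      rwa [← NNReal.coe_lt_coe, coe_nnnorm, NNReal.coe_one]
  -- powers of B are eventually small
  have hgel := spectrum.pow_nnnorm_pow_one_div_tendsto_nhds_spectralRadius B
  have hev : ∀ᶠ n : ℕ in Filter.atTop, (‖B ^ n‖₊ : ENNReal) ^ (1 / (n : ℝ)) < 1 :=
    hgel.eventually_lt_const hρ
  obtain ⟨N, hN⟩ := Filter.eventually_atTop.mp hev
  have hBn : ∀ n : ℕ, N + 1 ≤ n → ‖B ^ n‖ ≤ 1 := by
    intro n hn
    have hn0 : 0 < n := lt_of_lt_of_le (Nat.succ_pos N) hn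
    have hx := hN n (le_trans (Nat.le_succ N) hn)
    have hlt : (‖B ^ n‖₊ : ENNReal) < 1 := by
      by_contra hc
      push_neg at hc
      have : (1 : ENNReal) ≤ (‖B ^ n‖₊ : ENNReal) ^ (1 / (n : ℝ)) := by
        calc (1 : ENNReal) = 1 ^ (1 / (n : ℝ)) := (ENNReal.one_rpow _).symm
        _ ≤ (‖B ^ n‖₊ : ENNReal) ^ (1 / (n : ℝ)) :=
          ENNReal.rpow_le_rpow hc (by positivity)
      exact absurd hx (not_lt.mpr this)
    have : ‖B ^ n‖₊ < 1 := by exact_mod_cast hlt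
    exact le_of_lt this
  -- uniform bound on powers of B
  set C₁ : ℝ := (∑ k ∈ Finset.range (N + 1), ‖B ^ k‖) + 1 with hC₁def
  have hC₁pos : 1 ≤ C₁ := by
    have : (0 : ℝ) ≤ ∑ k ∈ Finset.range (N + 1), ‖B ^ k‖ :=
      Finset.sum_nonneg fun _ _ => norm_nonneg _
    simp only [hC₁def]; linarith
  have hC₁ : ∀ n : ℕ, ‖B ^ n‖ ≤ C₁ := by
    intro n
    rcases lt_or_ge n (N + 1) with h | h
    · have h1 : ‖B ^ n‖ ≤ ∑ k ∈ Finset.range (N + 1), ‖B ^ k‖ :=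
        Finset.single_le_sum (fun _ _ => norm_nonneg _) (Finset.mem_range.mpr h)
      simp only [hC₁def]; linarith
    · have := hBn n h
      simp only [hC₁def]
      have h2 : (0 : ℝ) ≤ ∑ k ∈ Finset.range (N + 1), ‖B ^ k‖ :=
        Finset.sum_nonneg fun _ _ => norm_nonneg _
      linarith
  -- bound on exp(s • G) for s ∈ [0,1]
  have hcont : Continuous fun s : ℝ => NormedSpace.exp ((s : ℂ) • G) :=
    NormedSpace.exp_continuous.comp (Complex.continuous_ofReal.smul continuous_const)
  obtain ⟨C₂, hC₂⟩ := (isCompact_Icc (a := (0:ℝ)) (b := 1)).exists_bound_of_continuousOn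
    hcont.continuousOn
  have hC₂0 : 0 ≤ C₂ := le_trans (norm_nonneg _) (hC₂ 0 (by norm_num))
  refine ⟨max 1 (C₁ * C₂), le_max_left _ _, fun t ht => ?_⟩
  -- decompose exp(t • F)
  have hsmul : t • F = (t : ℂ) • F := (algebraMap_smul ℂ t F).symm
  have hdecomp : (t : ℂ) • F = ((t : ℂ) * α) • (1 : Matrix (Fin m) (Fin m) ℂ) + (t : ℂ) • G := by
    rw [hG, smul_sub, smul_smul]
    ring_nf
    abel
  have hcomm : Commute (((t : ℂ) * α) • (1 : Matrix (Fin m) (Fin m) ℂ)) ((t : ℂ) • G) :=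
    ((Commute.one_left G).smul_left _).smul_right _
  have hexp1 : NormedSpace.exp (((t : ℂ) * α) • (1 : Matrix (Fin m) (Fin m) ℂ))
      = Complex.exp ((t : ℂ) * α) • (1 : Matrix (Fin m) (Fin m) ℂ) := by
    rw [← Algebra.algebraMap_eq_smul_one, ← NormedSpace.algebraMap_exp_comm,
      Algebra.algebraMap_eq_smul_one, Complex.exp_eq_exp_ℂ]
  have hkey : NormedSpace.exp (t • F)
      = Complex.exp ((t : ℂ) * α) • NormedSpace.exp ((t : ℂ) • G) := by
    rw [hsmul, hdecomp, NormedSpace.exp_add_of_commute hcomm, hexp1, smul_mul_assoc, one_mul]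
  rw [hkey, norm_smul]
  have hnorm1 : ‖Complex.exp ((t : ℂ) * α)‖ = Real.exp (α * t) := by
    rw [Complex.norm_exp]
    norm_num [mul_comm]
  rw [hnorm1]
  -- bound the exp((t:ℂ) • G) part
  set n := ⌊t⌋₊ with hn
  set s := t - n with hs
  have hs0 : 0 ≤ s := by
    have := Nat.floor_le ht
    simp only [hs, hn]; linarith
  have hs1 : s ≤ 1 := by
    have := (Nat.lt_floor_add_one t).le
    simp only [hs, hn]; push_cast; linarith
  have hts : (t : ℂ) = (n : ℂ) + (s : ℂ) := by
    simp only [hs]; push_cast; ring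
  have hcomm2 : Commute ((n : ℂ) • G) ((s : ℂ) • G) :=
    ((Commute.refl G).smul_left _).smul_right _
  have hsplit : NormedSpace.exp ((t : ℂ) • G)
      = B ^ n * NormedSpace.exp ((s : ℂ) • G) := by
    rw [hts, add_smul, NormedSpace.exp_add_of_commute hcomm2]
    congr 1
    rw [Nat.cast_smul_eq_nsmul ℂ n G, NormedSpace.exp_nsmul]
  have hbound : ‖NormedSpace.exp ((t : ℂ) • G)‖ ≤ C₁ * C₂ := by
    rw [hsplit]
    calc ‖B ^ n * NormedSpace.exp ((s : ℂ) • G)‖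
        ≤ ‖B ^ n‖ * ‖NormedSpace.exp ((s : ℂ) • G)‖ := norm_mul_le _ _
      _ ≤ C₁ * C₂ := by
          apply mul_le_mul (hC₁ n) (hC₂ s ⟨hs0, hs1⟩) (norm_nonneg _)
          linarith
  calc Real.exp (α * t) * ‖NormedSpace.exp ((t : ℂ) • G)‖
      ≤ Real.exp (α * t) * (C₁ * C₂) := by
        apply mul_le_mul_of_nonneg_left hbound (Real.exp_pos _).le
    _ ≤ max 1 (C₁ * C₂) * Real.exp (α * t) := by
        rw [mul_comm]
        apply mul_le_mul_of_nonneg_right (le_max_right _ _) (Real.exp_pos _).le
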